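/- If g ∈ Lʳ(Ω) with 1 ≤ r ≤ ∞, then the pseudo-rearrangement D of g with respect to a measurable function v belongs to Lʳ(0,|Ω|) and ‖D‖_{Lʳ(0,|Ω|)} ≤ ‖g‖_{Lʳ(Ω)}. -/

import Mathlib

open MeasureTheory Set ENNReal Filter Topology

/-- The pseudo-rearrangement of `g` has the same `Lʳ` summability as `g`,
with `‖D‖_{Lʳ(0,|Ω|)} ≤ ‖g‖_{Lʳ(Ω)}`. -/
theorem stmt_7 {N : ℕ} (Ω : Set (EuclideanSpace ℝ (Fin N)))
    (hΩm : MeasurableSet Ω) (hΩb : Bornology.IsBounded Ω)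
    (v : EuclideanSpace ℝ (Fin N) → ℝ) (hv : Measurable v)
    (g : EuclideanSpace ℝ (Fin N) → ℝ)
    (r : ℝ≥0∞) (hr : 1 ≤ r)
    (hg : MemLp g r (volume.restrict Ω))
    (F : ℝ → Set (EuclideanSpace ℝ (Fin N)))
    (hFmeas : ∀ s, MeasurableSet (F s))
    (hFsub : ∀ s, F s ⊆ Ω)
    (hFvol : ∀ s ∈ Icc (0 : ℝ) (volume Ω).toReal, (volume (F s)).toReal = s)
    (hFmono : ∀ s₁ s₂, s₁ < s₂ → F s₁ ⊆ F s₂)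
    (D : ℝ → ℝ)
    (hD : ∀ᵐ s ∂(volume.restrict (Ioo (0 : ℝ) (volume Ω).toReal)),
      HasDerivAt (fun t => ∫ x in F t, |g x|) (D s) s) :
    MemLp D r (volume.restrict (Ioo (0 : ℝ) (volume Ω).toReal)) ∧
      eLpNorm D r (volume.restrict (Ioo (0 : ℝ) (volume Ω).toReal))
        ≤ eLpNorm g r (volume.restrict Ω) := by
  classical
  set m := (volume Ω).toReal with hm_def
  have hΩlt : volume Ω < ∞ := hΩb.measure_lt_top
  have hFfin : ∀ t, volume (F t) ≠ ∞ := fun t =>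
    ((measure_mono (hFsub t)).trans_lt hΩlt).ne
  haveI hfinΩ : IsFiniteMeasure (volume.restrict Ω) :=
    ⟨by simpa [Measure.restrict_apply_univ] using hΩlt⟩
  have hr0 : r ≠ 0 := (zero_lt_one.trans_le hr).ne'
  have hgabs : IntegrableOn (fun x => |g x|) Ω volume := (hg.integrable hr).abs
  set φ : ℝ → ℝ := fun t => ∫ x in F t, |g x| with hφ_def
  have hφmono : Monotone φ := by
    intro t₁ t₂ h
    rcases eq_or_lt_of_le h with rfl | hlt
    · exact le_rfl
    · exact setIntegral_mono_set (hgabs.mono_set (hFsub t₂))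
        (Eventually.of_forall fun x => abs_nonneg _)
        (HasSubset.Subset.eventuallyLE (hFmono _ _ hlt))
  have hDmeas : AEStronglyMeasurable D (volume.restrict (Ioo (0:ℝ) m)) := by
    have hae : D =ᵐ[volume.restrict (Ioo (0:ℝ) m)] deriv φ := by
      filter_upwards [hD] with s hs using (hs.deriv).symm
    exact ((measurable_deriv φ).aestronglyMeasurable).congr hae.symm
  have hslope0 : ∀ s : ℝ, HasDerivAt φ (D s) s →
      Tendsto (slope φ s) (𝓝[>] s) (𝓝 (D s)) := by
    intro s hs
    exact (hasDerivAt_iff_tendsto_slope.1 hs).mono_left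
      (nhdsWithin_mono s fun y hy => (ne_of_gt hy))
  have hDnn : ∀ᵐ s ∂(volume.restrict (Ioo (0:ℝ) m)), 0 ≤ D s := by
    filter_upwards [hD] with s hs
    refine ge_of_tendsto (hslope0 s hs) ?_
    filter_upwards [self_mem_nhdsWithin] with y hy
    rw [slope_def_field]
    exact div_nonneg (sub_nonneg.2 (hφmono hy.le)) (sub_nonneg.2 hy.le)
  have hμF : ∀ t ∈ Icc (0:ℝ) m, volume (F t) = ENNReal.ofReal t := by
    intro t ht
    rw [← ENNReal.ofReal_toReal (hFfin t), hFvol t ht]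
  have hEdiff : ∀ {s y : ℝ}, 0 ≤ s → s < y → y ≤ m →
      volume (F y \ F s) = ENNReal.ofReal (y - s) := by
    intro s y hs0 hsy hym
    rw [measure_diff (hFmono s y hsy) (hFmeas s).nullMeasurableSet (hFfin s),
      hμF y ⟨hs0.trans hsy.le, hym⟩, hμF s ⟨hs0, hsy.le.trans hym⟩,
      ← ENNReal.ofReal_sub y hs0]
  have hincr : ∀ (f : EuclideanSpace ℝ (Fin N) → ℝ), IntegrableOn f Ω volume →
      ∀ {s y : ℝ}, s < y →
      (∫ x in F y, f x) - ∫ x in F s, f x = ∫ x in F y \ F s, f x := by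
    intro f hf s y hsy
    exact (integral_diff (hFmeas s) (hf.mono_set (hFsub y)) (hFmono s y hsy)).symm
  rcases eq_or_ne r ∞ with rfl | hrtop
  · -- case r = ∞
    set C' := eLpNormEssSup g (volume.restrict Ω) with hC'
    have hC'fin : C' ≠ ∞ := by
      have h2 := hg.2
      rwa [eLpNorm_exponent_top, lt_top_iff_ne_top] at h2
    have hbound : ∀ᵐ s ∂(volume.restrict (Ioo (0:ℝ) m)), ‖D s‖ ≤ C'.toReal := by
      filter_upwards [hD, hDnn, ae_restrict_mem measurableSet_Ioo] with s hs hs0 hsm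
      rw [Real.norm_eq_abs, abs_of_nonneg hs0]
      refine le_of_tendsto (hslope0 s hs) ?_
      filter_upwards [Ioo_mem_nhdsGT hsm.2] with y hy
      have hys : 0 < y - s := sub_pos.2 hy.1
      have hEy := hEdiff hsm.1.le hy.1 hy.2.le
      have hEsub : F y \ F s ⊆ Ω := diff_subset.trans (hFsub y)
      have hintE : IntegrableOn (fun x => |g x|) (F y \ F s) volume :=
        hgabs.mono_set hEsub
      have h1 : ENNReal.ofReal (∫ x in F y \ F s, |g x|) ≤ C' * ENNReal.ofReal (y - s) := by
        rw [ofReal_integral_eq_lintegral_ofReal hintE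
          (Eventually.of_forall fun x => abs_nonneg _)]
        calc ∫⁻ x in F y \ F s, ENNReal.ofReal |g x| ∂volume
            ≤ ∫⁻ _x in F y \ F s, C' ∂volume := by
              refine lintegral_mono_ae ?_
              refine ae_restrict_of_ae_restrict_of_subset hEsub ?_
              filter_upwards [ae_le_eLpNormEssSup (f := g) (μ := volume.restrict Ω)] with x hx
              rw [← Real.enorm_eq_ofReal_abs]
              exact hx
          _ = C' * ENNReal.ofReal (y - s) := by rw [setLIntegral_const, hEy]
      have h2 : (∫ x in F y \ F s, |g x|) ≤ C'.toReal * (y - s) := by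
        have hne : C' * ENNReal.ofReal (y - s) ≠ ∞ :=
          ENNReal.mul_ne_top hC'fin ofReal_ne_top
        have h3 := (ENNReal.ofReal_le_iff_le_toReal hne).1 h1
        rwa [ENNReal.toReal_mul, ENNReal.toReal_ofReal hys.le] at h3
      rw [slope_def_field, div_le_iff₀ hys]
      calc φ y - φ s = ∫ x in F y \ F s, |g x| := hincr _ hgabs hy.1
        _ ≤ C'.toReal * (y - s) := h2
    refine ⟨memLp_top_of_bound hDmeas _ hbound, ?_⟩
    rw [eLpNorm_exponent_top, eLpNorm_exponent_top]
    calc eLpNormEssSup D (volume.restrict (Ioo (0:ℝ) m))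
        ≤ ENNReal.ofReal C'.toReal := eLpNormEssSup_le_of_ae_bound hbound
      _ ≤ C' := ENNReal.ofReal_toReal_le
  · -- case r finite
    have hp1 : 1 ≤ r.toReal := by
      rw [← ENNReal.toReal_one]
      exact ENNReal.toReal_mono hrtop hr
    set p := r.toReal with hp_def
    have hp0 : 0 < p := lt_of_lt_of_le zero_lt_one hp1
    have h1p : (1:ℝ) - 1/p ≥ 0 := by
      have : 1/p ≤ 1 := by rw [div_le_one hp0]; exact hp1
      linarith
    have habsnn : ∀ x, 0 ≤ |g x| ^ p := fun x => Real.rpow_nonneg (abs_nonneg _) _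
    have hgp : IntegrableOn (fun x => |g x| ^ p) Ω volume := by
      have h := hg.integrable_norm_rpow hr0 hrtop
      exact (by simpa [Real.norm_eq_abs, ← hp_def] using h : Integrable (fun x => |g x| ^ p) (volume.restrict Ω))
    set ψ : ℝ → ℝ := fun t => ∫ x in F t, |g x| ^ p with hψ_def
    have hψmono : Monotone ψ := by
      intro t₁ t₂ h
      rcases eq_or_lt_of_le h with rfl | hlt
      · exact le_rfl
      · exact setIntegral_mono_set (hgp.mono_set (hFsub t₂))
          (Eventually.of_forall fun x => habsnn x)
          (HasSubset.Subset.eventuallyLE (hFmono _ _ hlt))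
    set μψ := hψmono.stieltjesFunction.measure with hμψ_def
    have hWd : ∀ᵐ s, HasDerivAt ψ ((μψ.rnDeriv volume s).toReal) s := hψmono.ae_hasDerivAt
    have hkey : ∀ᵐ s ∂(volume.restrict (Ioo (0:ℝ) m)),
        (‖D s‖₊ : ℝ≥0∞) ^ p ≤ μψ.rnDeriv volume s := by
      filter_upwards [hD, hDnn, ae_restrict_mem measurableSet_Ioo,
        ae_restrict_of_ae hWd] with s hs hs0 hsm hWs
      set W := (μψ.rnDeriv volume s).toReal with hW_def
      have hW0 : 0 ≤ W := ENNReal.toReal_nonneg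
      have hslopeψ : Tendsto (slope ψ s) (𝓝[>] s) (𝓝 W) :=
        (hasDerivAt_iff_tendsto_slope.1 hWs).mono_left
          (nhdsWithin_mono s fun y hy => (ne_of_gt hy))
      have hDle : D s ≤ W ^ (1/p) := by
        refine le_of_tendsto_of_tendsto (hslope0 s hs)
          (hslopeψ.rpow_const (Or.inr (one_div_nonneg.2 hp0.le))) ?_
        filter_upwards [Ioo_mem_nhdsGT hsm.2] with y hy
        have hys : 0 < y - s := sub_pos.2 hy.1
        have hEy := hEdiff hsm.1.le hy.1 hy.2.le
        set E := F y \ F s with hE_def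
        have hEsub : E ⊆ Ω := diff_subset.trans (hFsub y)
        have hintE : IntegrableOn (fun x => |g x|) E volume := hgabs.mono_set hEsub
        have hintEp : IntegrableOn (fun x => |g x| ^ p) E volume := hgp.mono_set hEsub
        have hEmeas : MeasurableSet E := (hFmeas y).diff (hFmeas s)
        have hΔψ0 : 0 ≤ ∫ x in E, |g x| ^ p :=
          setIntegral_nonneg hEmeas fun x _ => habsnn x
        have h1 : ENNReal.ofReal (∫ x in E, |g x|) = eLpNorm g 1 (volume.restrict E) := by
          rw [ofReal_integral_eq_lintegral_ofReal hintE
            (Eventually.of_forall fun x => abs_nonneg _), eLpNorm_one_eq_lintegral_enorm]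
          exact lintegral_congr fun x => (Real.enorm_eq_ofReal_abs _).symm
        have h2 : eLpNorm g r (volume.restrict E) =
            ENNReal.ofReal (∫ x in E, |g x| ^ p) ^ (1/p) := by
          rw [eLpNorm_eq_lintegral_rpow_enorm_toReal hr0 hrtop]
          congr 1
          rw [ofReal_integral_eq_lintegral_ofReal hintEp (Eventually.of_forall habsnn)]
          refine lintegral_congr fun x => ?_
          rw [← ENNReal.ofReal_rpow_of_nonneg (abs_nonneg _) hp0.le,
            Real.enorm_eq_ofReal_abs]
        have h3 := eLpNorm_le_eLpNorm_mul_rpow_measure_univ (p := 1) (q := r) hr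
          (hg.1.mono_measure (Measure.restrict_mono hEsub le_rfl))
        have hA : ENNReal.ofReal (∫ x in E, |g x|) ≤
            ENNReal.ofReal (∫ x in E, |g x| ^ p) ^ (1/p)
              * ENNReal.ofReal (y - s) ^ (1 - 1/p) := by
          calc ENNReal.ofReal (∫ x in E, |g x|)
              = eLpNorm g 1 (volume.restrict E) := h1
            _ ≤ eLpNorm g r (volume.restrict E) *
                (volume.restrict E) univ ^ (1/(1:ℝ≥0∞).toReal - 1/r.toReal) := h3
            _ = ENNReal.ofReal (∫ x in E, |g x| ^ p) ^ (1/p)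
                * ENNReal.ofReal (y - s) ^ (1 - 1/p) := by
                rw [h2, Measure.restrict_apply_univ, hEy]
                norm_num
                rfl
        have hreal : (∫ x in E, |g x|) ≤
            (∫ x in E, |g x| ^ p) ^ (1/p) * (y - s) ^ (1 - 1/p) := by
          have h4 : ENNReal.ofReal (∫ x in E, |g x|) ≤
              ENNReal.ofReal ((∫ x in E, |g x| ^ p) ^ (1/p) * (y - s) ^ (1 - 1/p)) := by
            rw [ENNReal.ofReal_mul (Real.rpow_nonneg hΔψ0 _),
              ← ENNReal.ofReal_rpow_of_nonneg hΔψ0 (one_div_nonneg.2 hp0.le),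
              ← ENNReal.ofReal_rpow_of_nonneg hys.le h1p]
            exact hA
          exact (ENNReal.ofReal_le_ofReal_iff
            (mul_nonneg (Real.rpow_nonneg hΔψ0 _) (Real.rpow_nonneg hys.le _))).1 h4
        have hΔφ : φ y - φ s = ∫ x in E, |g x| := hincr _ hgabs hy.1
        have hΔψ : ψ y - ψ s = ∫ x in E, |g x| ^ p := hincr _ hgp hy.1
        rw [slope_def_field, slope_def_field, hΔφ, hΔψ,
          Real.div_rpow hΔψ0 hys.le,
          div_le_div_iff₀ hys (Real.rpow_pos_of_pos hys _)]
        have hexp : (1:ℝ) - 1/p + 1/p = 1 := by ring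
        calc (∫ x in E, |g x|) * (y - s) ^ (1/p)
            ≤ ((∫ x in E, |g x| ^ p) ^ (1/p) * (y - s) ^ (1 - 1/p)) * (y - s) ^ (1/p) :=
              mul_le_mul_of_nonneg_right hreal (Real.rpow_nonneg hys.le _)
          _ = (∫ x in E, |g x| ^ p) ^ (1/p) * (y - s) := by
              rw [mul_assoc, ← Real.rpow_add hys, hexp, Real.rpow_one]
      have hfinal : (D s) ^ p ≤ W := by
        calc (D s) ^ p ≤ (W ^ (1/p)) ^ p := Real.rpow_le_rpow hs0 hDle hp0.le
          _ = W := by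
            rw [← Real.rpow_mul hW0, one_div_mul_cancel hp0.ne', Real.rpow_one]
      calc (‖D s‖₊ : ℝ≥0∞) ^ p = ENNReal.ofReal (D s ^ p) := by
            rw [← enorm_eq_nnnorm, Real.enorm_eq_ofReal_abs, abs_of_nonneg hs0,
              ← ENNReal.ofReal_rpow_of_nonneg hs0 hp0.le]
        _ ≤ ENNReal.ofReal W := ENNReal.ofReal_le_ofReal hfinal
        _ ≤ μψ.rnDeriv volume s := ENNReal.ofReal_toReal_le
    have hB : ENNReal.ofReal (∫ x in Ω, |g x| ^ p)
        = ∫⁻ x in Ω, (‖g x‖₊ : ℝ≥0∞) ^ p ∂volume := by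
      rw [ofReal_integral_eq_lintegral_ofReal hgp (Eventually.of_forall habsnn)]
      refine lintegral_congr fun x => ?_
      rw [← ENNReal.ofReal_rpow_of_nonneg (abs_nonneg _) hp0.le, ← enorm_eq_nnnorm, Real.enorm_eq_ofReal_abs]
    have hlin : (∫⁻ s in Ioo (0:ℝ) m, (‖D s‖₊ : ℝ≥0∞) ^ p ∂volume)
        ≤ ∫⁻ x in Ω, (‖g x‖₊ : ℝ≥0∞) ^ p ∂volume := by
      calc (∫⁻ s in Ioo (0:ℝ) m, (‖D s‖₊ : ℝ≥0∞) ^ p ∂volume)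
          ≤ ∫⁻ s in Ioo (0:ℝ) m, μψ.rnDeriv volume s ∂volume := lintegral_mono_ae hkey
        _ = (volume.withDensity (μψ.rnDeriv volume)) (Ioo 0 m) :=
            (withDensity_apply _ measurableSet_Ioo).symm
        _ ≤ μψ (Ioo 0 m) := Measure.le_iff'.1 (Measure.withDensity_rnDeriv_le μψ volume) _
        _ ≤ μψ (Ioc 0 m) := measure_mono Ioo_subset_Ioc_self
        _ = ENNReal.ofReal (hψmono.stieltjesFunction m - hψmono.stieltjesFunction 0) :=
            hψmono.stieltjesFunction.measure_Ioc 0 m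
        _ ≤ ENNReal.ofReal (∫ x in Ω, |g x| ^ p) := by
            apply ENNReal.ofReal_le_ofReal
            have h5 : hψmono.stieltjesFunction m ≤ ∫ x in Ω, |g x| ^ p := by
              rw [hψmono.stieltjesFunction_eq]
              refine le_trans (hψmono.rightLim_le (lt_add_one m)) ?_
              exact setIntegral_mono_set hgp (Eventually.of_forall habsnn)
                (HasSubset.Subset.eventuallyLE (hFsub (m+1)))
            have h6 : 0 ≤ hψmono.stieltjesFunction 0 := by
              rw [hψmono.stieltjesFunction_eq]
              exact le_trans (setIntegral_nonneg (hFmeas 0) fun x _ => habsnn x)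
                (hψmono.le_rightLim le_rfl)
            linarith
        _ = ∫⁻ x in Ω, (‖g x‖₊ : ℝ≥0∞) ^ p ∂volume := hB
    have hnorm : eLpNorm D r (volume.restrict (Ioo (0:ℝ) m))
        ≤ eLpNorm g r (volume.restrict Ω) := by
      rw [eLpNorm_eq_lintegral_rpow_enorm_toReal hr0 hrtop,
        eLpNorm_eq_lintegral_rpow_enorm_toReal hr0 hrtop]
      exact ENNReal.rpow_le_rpow hlin (one_div_nonneg.2 hp0.le)
    exact ⟨⟨hDmeas, lt_of_le_of_lt hnorm hg.2⟩, hnorm⟩
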